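/- For every λ ∈ ℝ^m with λ ≥ 0 componentwise, the Riccati-ZXL backward recursion is well defined for all k = N, N−1, …, d: at each such step, Υ_k(λ) is symmetric positive definite (hence invertible), and Z_k(λ) and X_k(λ) are symmetric positive semidefinite. -/

import Mathlib

open Matrix

noncomputable section

section Aux

variable {p q : ℕ}

lemma psd_smul_aux {M : Matrix (Fin p) (Fin p) ℝ} (hM : M.PosSemidef) {c : ℝ} (hc : 0 ≤ c) :
    (c • M).PosSemidef := by
  rw [posSemidef_iff_dotProduct_mulVec]
  constructor
  · unfold Matrix.IsHermitian
    rw [conjTranspose_smul, hM.1]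
    simp
  · intro x
    simp only [smul_mulVec, dotProduct_smul, smul_eq_mul]
    exact mul_nonneg hc (hM.dotProduct_mulVec_nonneg x)

lemma psd_fromBlocks_diag {Z : Matrix (Fin p) (Fin p) ℝ} {X : Matrix (Fin q) (Fin q) ℝ}
    (hZ : Z.PosSemidef) (hX : X.PosSemidef) :
    (fromBlocks Z 0 0 X).PosSemidef := by
  rw [posSemidef_iff_dotProduct_mulVec]
  constructor
  · unfold Matrix.IsHermitian
    rw [fromBlocks_conjTranspose, hZ.1, hX.1]
    simp
  · intro x
    have hx : x = Sum.elim (fun i => x (Sum.inl i)) (fun j => x (Sum.inr j)) := by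
      ext (i | j) <;> rfl
    rw [hx, fromBlocks_mulVec]
    simp only [zero_mulVec, add_zero, zero_add, Function.star_sumElim, Sum.elim_comp_inl, Sum.elim_comp_inr]
    rw [sumElim_dotProduct_sumElim]
    exact add_nonneg (hZ.dotProduct_mulVec_nonneg _) (hX.dotProduct_mulVec_nonneg _)

lemma schur_step (σ : ℝ) (A Abar : Matrix (Fin p) (Fin p) ℝ) (B Bbar : Matrix (Fin p) (Fin q) ℝ)
    {Zk Xk : Matrix (Fin p) (Fin p) ℝ} (hZ : Zk.PosSemidef) (hX : Xk.PosSemidef)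
    {Ql : Matrix (Fin p) (Fin p) ℝ} {Rl : Matrix (Fin q) (Fin q) ℝ}
    (hQl : Ql.PosSemidef) (hRl : Rl.PosDef) :
    (Bᵀ * Zk * B + σ ^ 2 • (Bbarᵀ * Xk * Bbar) + Rl).PosDef ∧
    (Aᵀ * Zk * A + σ ^ 2 • (Abarᵀ * Xk * Abar) + Ql
      - (Bᵀ * Zk * A + σ ^ 2 • (Bbarᵀ * Xk * Abar))ᵀ
        * (Bᵀ * Zk * B + σ ^ 2 • (Bbarᵀ * Xk * Bbar) + Rl)⁻¹
        * (Bᵀ * Zk * A + σ ^ 2 • (Bbarᵀ * Xk * Abar))).PosSemidef := by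
  have hZt : Zkᵀ = Zk := by simpa [Matrix.IsSymm] using hZ.1
  have hXt : Xkᵀ = Xk := by simpa [Matrix.IsSymm] using hX.1
  set Ups := Bᵀ * Zk * B + σ ^ 2 • (Bbarᵀ * Xk * Bbar) + Rl with hUpsdef
  set M := Bᵀ * Zk * A + σ ^ 2 • (Bbarᵀ * Xk * Abar) with hMdef
  set S := Aᵀ * Zk * A + σ ^ 2 • (Abarᵀ * Xk * Abar) + Ql with hSdef
  have hBZB : (Bᵀ * Zk * B).PosSemidef := by
    have := hZ.conjTranspose_mul_mul_same B
    simpa using this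
  have hBXB : (σ ^ 2 • (Bbarᵀ * Xk * Bbar)).PosSemidef := by
    refine psd_smul_aux ?_ (sq_nonneg σ)
    have := hX.conjTranspose_mul_mul_same Bbar
    simpa using this
  have hUps : Ups.PosDef := Matrix.PosDef.posSemidef_add (hBZB.add hBXB) hRl
  haveI := hUps.isUnit.invertible
  set C : Matrix (Fin p ⊕ Fin p) (Fin p ⊕ Fin q) ℝ := fromBlocks A B (σ • Abar) (σ • Bbar) with hC
  set D : Matrix (Fin p ⊕ Fin p) (Fin p ⊕ Fin p) ℝ := fromBlocks Zk 0 0 Xk with hD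
  have hW : fromBlocks S Mᵀ M Ups = Cᵀ * D * C + fromBlocks Ql 0 0 Rl := by
    rw [hC, hD, fromBlocks_transpose, fromBlocks_multiply, fromBlocks_multiply,
      fromBlocks_add]
    rw [hSdef, hMdef, hUpsdef]
    simp [Matrix.smul_mul, Matrix.mul_smul, smul_smul, transpose_smul, transpose_mul,
      hZt, hXt, sq, Matrix.mul_assoc, add_comm]
  have hWpsd : (fromBlocks S Mᵀ M Ups).PosSemidef := by
    rw [hW]
    have hDpsd : D.PosSemidef := psd_fromBlocks_diag hZ hX
    have h1 : (Cᵀ * D * C).PosSemidef := by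
      have := hDpsd.conjTranspose_mul_mul_same C
      simpa using this
    exact h1.add (psd_fromBlocks_diag hQl hRl.posSemidef)
  have hMH : (Mᵀ)ᴴ = M := by simp
  have hfin := (Matrix.PosDef.fromBlocks₂₂ S Mᵀ hUps).mp (by rwa [hMH])
  refine ⟨hUps, ?_⟩
  rwa [hMH] at hfin

end Aux

/-- `Υ_k = Bᵀ Z_{k+1} B + σ² B̄ᵀ X_{k+1} B̄ + R(λ)`. -/
def Upsf {n mu : ℕ} (σ : ℝ) (B Bbar : Matrix (Fin n) (Fin mu) ℝ)
    (Rlam : Matrix (Fin mu) (Fin mu) ℝ) (Z X : ℕ → Matrix (Fin n) (Fin n) ℝ) (k : ℕ) :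
    Matrix (Fin mu) (Fin mu) ℝ :=
  Bᵀ * Z (k + 1) * B + σ ^ 2 • (Bbarᵀ * X (k + 1) * Bbar) + Rlam

/-- `M_k = Bᵀ Z_{k+1} A + σ² B̄ᵀ X_{k+1} Ā`. -/
def Mf {n mu : ℕ} (σ : ℝ) (A Abar : Matrix (Fin n) (Fin n) ℝ)
    (B Bbar : Matrix (Fin n) (Fin mu) ℝ) (Z X : ℕ → Matrix (Fin n) (Fin n) ℝ) (k : ℕ) :
    Matrix (Fin mu) (Fin n) ℝ :=
  Bᵀ * Z (k + 1) * A + σ ^ 2 • (Bbarᵀ * X (k + 1) * Abar)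

/-- `L_k = M_kᵀ Υ_k⁻¹ M_k` for `k ≤ N` and `L_k = 0` for `k > N`. -/
def Lf {n mu : ℕ} (N : ℕ) (σ : ℝ) (A Abar : Matrix (Fin n) (Fin n) ℝ)
    (B Bbar : Matrix (Fin n) (Fin mu) ℝ) (Rlam : Matrix (Fin mu) (Fin mu) ℝ)
    (Z X : ℕ → Matrix (Fin n) (Fin n) ℝ) (k : ℕ) : Matrix (Fin n) (Fin n) ℝ :=
  if k ≤ N then
    (Mf σ A Abar B Bbar Z X k)ᵀ * (Upsf σ B Bbar Rlam Z X k)⁻¹ * Mf σ A Abar B Bbar Z X k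
  else 0

/-- The Riccati-ZXL backward recursion with horizon `N`, delay `d` and terminal value
`Z_{N+1} = X_{N+1} = Flam`:  for `k = N, …, d`,
`Z_k = Aᵀ Z_{k+1} A + σ² Āᵀ X_{k+1} Ā + Q(λ) − L_k` and
`X_k = Z_k + ∑_{i=0}^{d−1} (Aᵀ)^i L_{k+i} A^i`. -/
def RiccatiZXL {n mu : ℕ} (d N : ℕ) (σ : ℝ) (A Abar : Matrix (Fin n) (Fin n) ℝ)
    (B Bbar : Matrix (Fin n) (Fin mu) ℝ) (Qlam : Matrix (Fin n) (Fin n) ℝ)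
    (Rlam : Matrix (Fin mu) (Fin mu) ℝ) (Flam : Matrix (Fin n) (Fin n) ℝ)
    (Z X : ℕ → Matrix (Fin n) (Fin n) ℝ) : Prop :=
  Z (N + 1) = Flam ∧ X (N + 1) = Flam ∧
    ∀ k, d ≤ k → k ≤ N →
      Z k = Aᵀ * Z (k + 1) * A + σ ^ 2 • (Abarᵀ * X (k + 1) * Abar) + Qlam
              - Lf N σ A Abar B Bbar Rlam Z X k ∧
      X k = Z k + ∑ i ∈ Finset.range d, (Aᵀ) ^ i * Lf N σ A Abar B Bbar Rlam Z X (k + i) * A ^ i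

/-- With symmetric positive definite `Q i, R i, F i` (`i = 0,…,m`) and
`Q(λ) = Q 0 + ∑ λ i • Q (i+1)` etc., for every `λ ≥ 0` componentwise the Riccati-ZXL
backward recursion is well defined for all `k = N, …, d`: at each such step `Υ_k(λ)` is
symmetric positive definite (hence invertible), and `Z_k(λ)`, `X_k(λ)` are symmetric
positive semidefinite. -/
theorem stmt7 {n mu m : ℕ} (hn : 0 < n) (hmu : 0 < mu) (d N : ℕ) (hd : 1 ≤ d) (hN : d ≤ N)
    (σ : ℝ) (hσ : 0 < σ)
    (A Abar : Matrix (Fin n) (Fin n) ℝ) (B Bbar : Matrix (Fin n) (Fin mu) ℝ)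
    (Q : Fin (m + 1) → Matrix (Fin n) (Fin n) ℝ)
    (R : Fin (m + 1) → Matrix (Fin mu) (Fin mu) ℝ)
    (F : Fin (m + 1) → Matrix (Fin n) (Fin n) ℝ)
    (hQ : ∀ i, (Q i).PosDef) (hR : ∀ i, (R i).PosDef) (hF : ∀ i, (F i).PosDef)
    (lam : Fin m → ℝ) (hlam : ∀ i, 0 ≤ lam i)
    (Z X : ℕ → Matrix (Fin n) (Fin n) ℝ)
    (hZX : RiccatiZXL d N σ A Abar B Bbar
      (Q 0 + ∑ i : Fin m, lam i • Q i.succ) (R 0 + ∑ i : Fin m, lam i • R i.succ)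
      (F 0 + ∑ i : Fin m, lam i • F i.succ) Z X) :
    ∀ k, d ≤ k → k ≤ N →
      (Upsf σ B Bbar (R 0 + ∑ i : Fin m, lam i • R i.succ) Z X k).PosDef ∧
      IsUnit (Upsf σ B Bbar (R 0 + ∑ i : Fin m, lam i • R i.succ) Z X k) ∧
      (Z k).PosSemidef ∧ (X k).PosSemidef := by
  obtain ⟨hZN, hXN, hrec⟩ := hZX
  set Ql := Q 0 + ∑ i : Fin m, lam i • Q i.succ with hQldef
  set Rl := R 0 + ∑ i : Fin m, lam i • R i.succ with hRldef
  set Fl := F 0 + ∑ i : Fin m, lam i • F i.succ with hFldef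
  have hQlpd : Ql.PosDef := by
    refine (hQ 0).add_posSemidef ?_
    refine Finset.sum_induction _ _ (fun a b ha hb => ha.add hb) Matrix.PosSemidef.zero ?_
    intro i _
    exact psd_smul_aux (hQ i.succ).posSemidef (hlam i)
  have hRlpd : Rl.PosDef := by
    refine (hR 0).add_posSemidef ?_
    refine Finset.sum_induction _ _ (fun a b ha hb => ha.add hb) Matrix.PosSemidef.zero ?_
    intro i _
    exact psd_smul_aux (hR i.succ).posSemidef (hlam i)
  have hFlpd : Fl.PosDef := by
    refine (hF 0).add_posSemidef ?_
    refine Finset.sum_induction _ _ (fun a b ha hb => ha.add hb) Matrix.PosSemidef.zero ?_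
    intro i _
    exact psd_smul_aux (hF i.succ).posSemidef (hlam i)
  -- downward induction
  have key : ∀ j k, d ≤ k → k ≤ N + 1 → N + 1 ≤ k + j →
      (Z k).PosSemidef ∧ (X k).PosSemidef := by
    intro j
    induction j with
    | zero =>
      intro k hdk hk1 hge
      have hk : k = N + 1 := by omega
      subst hk
      rw [hZN, hXN]
      exact ⟨hFlpd.posSemidef, hFlpd.posSemidef⟩
    | succ j ih =>
      intro k hdk hk1 hge
      by_cases hk : k ≤ N
      · obtain ⟨hZk, hXk⟩ := hrec k hdk hk
        have hnext := ih (k + 1) (by omega) (by omega) (by omega)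
        have hLpsd : ∀ k', k ≤ k' → (Lf N σ A Abar B Bbar Rl Z X k').PosSemidef := by
          intro k' hkk'
          rw [Lf]
          split
          · rename_i hk'N
            have h1 := ih (k' + 1) (by omega) (by omega) (by omega)
            have hUps := (schur_step σ A Abar B Bbar h1.1 h1.2 hQlpd.posSemidef hRlpd).1
            have h2 := hUps.inv.posSemidef.conjTranspose_mul_mul_same
              (Mf σ A Abar B Bbar Z X k')
            simp only [Upsf]
            simpa using h2
          · exact Matrix.PosSemidef.zero
        have hZpsd : (Z k).PosSemidef := by
          rw [hZk, Lf, if_pos hk]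
          simp only [Mf, Upsf]
          exact (schur_step σ A Abar B Bbar hnext.1 hnext.2 hQlpd.posSemidef hRlpd).2
        have hXpsd : (X k).PosSemidef := by
          rw [hXk]
          refine hZpsd.add ?_
          refine Finset.sum_induction _ _ (fun a b ha hb => ha.add hb)
            Matrix.PosSemidef.zero ?_
          intro i _
          have hL := hLpsd (k + i) (by omega)
          have := hL.conjTranspose_mul_mul_same (A ^ i)
          simpa [Matrix.transpose_pow, Matrix.conjTranspose_eq_transpose_of_trivial]
            using this
        exact ⟨hZpsd, hXpsd⟩
      · have hkN : k = N + 1 := by omega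
        subst hkN
        rw [hZN, hXN]
        exact ⟨hFlpd.posSemidef, hFlpd.posSemidef⟩
  have main : ∀ k, d ≤ k → k ≤ N + 1 → (Z k).PosSemidef ∧ (X k).PosSemidef :=
    fun k h1 h2 => key (N + 1) k h1 h2 (by omega)
  intro k hdk hkN
  have hnext := main (k + 1) (by omega) (by omega)
  have hUps : (Upsf σ B Bbar Rl Z X k).PosDef := by
    simp only [Upsf]
    exact (schur_step σ A Abar B Bbar hnext.1 hnext.2 hQlpd.posSemidef hRlpd).1
  exact ⟨hUps, hUps.isUnit, (main k hdk (by omega)).1, (main k hdk (by omega)).2⟩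


end
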